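/- arXiv:2404.19461 — 6 statements merged into one kernel-verified Lean document; each statement's English description precedes it below -/
import Mathlib

section
/- Let (p_k) be a sequence of real numbers with p_1 ≥ 2 such that for every k, p_k^3 ≤ p_{k+1} < (p_k + 1)^3 - 1. Then the sequence (p_k^{1/3^k}) is nondecreasing, the sequence ((p_k+1)^{1/3^k}) is strictly decreasing, and p_k^{1/3^k} < (p_j+1)^{1/3^j} for all k, j. -/
private lemma cube_root_eq (x : ℝ) (hx : 0 ≤ x) (k : ℕ) :
    x ^ ((1 : ℝ) / 3 ^ k) = (x ^ 3) ^ ((1 : ℝ) / 3 ^ (k + 1)) := by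
  rw [← Real.rpow_natCast x 3, ← Real.rpow_mul hx]
  congr 1
  have h3 : (3 : ℝ) ^ (k + 1) = 3 * 3 ^ k := by ring
  push_cast
  rw [h3]
  field_simp

theorem stmt1 (p : ℕ → ℝ) (hp1 : 2 ≤ p 1)
    (hrec : ∀ k ≥ 1, p k ^ 3 ≤ p (k + 1) ∧ p (k + 1) < (p k + 1) ^ 3 - 1) :
    (∀ k ≥ 1, p k ^ ((1 : ℝ) / 3 ^ k) ≤ p (k + 1) ^ ((1 : ℝ) / 3 ^ (k + 1))) ∧
    (∀ k ≥ 1, (p (k + 1) + 1) ^ ((1 : ℝ) / 3 ^ (k + 1)) < (p k + 1) ^ ((1 : ℝ) / 3 ^ k)) ∧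
    (∀ k ≥ 1, ∀ j ≥ 1, p k ^ ((1 : ℝ) / 3 ^ k) < (p j + 1) ^ ((1 : ℝ) / 3 ^ j)) := by
  have hge : ∀ k, 1 ≤ k → 2 ≤ p k := by
    intro k hk
    induction k, hk using Nat.le_induction with
    | base => exact hp1
    | succ n hn ih =>
      have h := (hrec n hn).1
      have h8 : (2:ℝ)^3 ≤ p n ^ 3 := pow_le_pow_left₀ (by norm_num) ih 3
      norm_num at h8
      linarith
  have hexp : ∀ k : ℕ, 0 < (1 : ℝ) / 3 ^ k := by intro k; positivity
  -- part A
  have hA : ∀ k ≥ 1, p k ^ ((1 : ℝ) / 3 ^ k) ≤ p (k + 1) ^ ((1 : ℝ) / 3 ^ (k + 1)) := by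
    intro k hk
    have h0 : (0 : ℝ) ≤ p k := by linarith [hge k hk]
    rw [cube_root_eq _ h0]
    exact Real.rpow_le_rpow (by positivity) (hrec k hk).1 (hexp (k + 1)).le
  -- part B
  have hB : ∀ k ≥ 1, (p (k + 1) + 1) ^ ((1 : ℝ) / 3 ^ (k + 1)) < (p k + 1) ^ ((1 : ℝ) / 3 ^ k) := by
    intro k hk
    have h0 : (0 : ℝ) ≤ p k + 1 := by linarith [hge k hk]
    rw [cube_root_eq _ h0]
    refine Real.rpow_lt_rpow (by linarith [hge (k+1) (by omega : 1 ≤ k+1)]) ?_ (hexp (k + 1))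
    have := (hrec k hk).2
    linarith
  refine ⟨hA, hB, ?_⟩
  -- a monotone, b antitone
  have hAmono : ∀ k, 1 ≤ k → ∀ m, k ≤ m →
      p k ^ ((1 : ℝ) / 3 ^ k) ≤ p m ^ ((1 : ℝ) / 3 ^ m) := by
    intro k hk m hm
    induction m, hm using Nat.le_induction with
    | base => exact le_refl _
    | succ n hn ih => exact ih.trans (hA n (by omega))
  have hBanti : ∀ j, 1 ≤ j → ∀ m, j ≤ m →
      (p m + 1) ^ ((1 : ℝ) / 3 ^ m) ≤ (p j + 1) ^ ((1 : ℝ) / 3 ^ j) := by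
    intro j hj m hm
    induction m, hm using Nat.le_induction with
    | base => exact le_refl _
    | succ n hn ih => exact le_trans (hB n (by omega)).le ih
  intro k hk j hj
  have hab : ∀ m, 1 ≤ m → p m ^ ((1 : ℝ) / 3 ^ m) < (p m + 1) ^ ((1 : ℝ) / 3 ^ m) := by
    intro m hm
    exact Real.rpow_lt_rpow (by linarith [hge m hm]) (by linarith) (hexp m)
  rcases le_total k j with h | h
  · exact lt_of_le_of_lt (hAmono k hk j h) (hab j hj)
  · exact lt_of_lt_of_le (hab k hk) (hBanti j hj k h)
end

section
/- Let (p_k) be a sequence of integers with p_k ≥ 2 for all k such that p_k^3 ≤ p_{k+1} < (p_k+1)^3 - 1 for every k ≥ 1. Then w := lim_{k→∞} p_k^{1/3^k} exists, satisfies w > 1, and ⌊w^{3^k}⌋ = p_k for every k ≥ 1. -/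
private lemma rpow_inv_pow (a : ℝ) (ha : 0 ≤ a) (k : ℕ) :
    (a ^ ((1:ℝ)/3^k)) ^ ((3:ℕ)^k) = a := by
  rw [← Real.rpow_natCast (a ^ ((1:ℝ)/3^k)) (3^k), ← Real.rpow_mul ha]
  rw [show ((1:ℝ)/3^k) * (((3:ℕ)^k : ℕ) : ℝ) = 1 by push_cast; field_simp]
  exact Real.rpow_one a

private lemma cube_rpow (a : ℝ) (ha : 0 ≤ a) (k : ℕ) :
    (a ^ 3) ^ ((1:ℝ)/3^(k+1)) = a ^ ((1:ℝ)/3^k) := by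
  rw [← Real.rpow_natCast a 3, ← Real.rpow_mul ha]
  congr 1
  push_cast
  rw [pow_succ]
  field_simp

private lemma rpow_pow_third (b : ℝ) (hb : 0 ≤ b) (k : ℕ) :
    (b ^ ((1:ℝ)/3^(k+1))) ^ ((3:ℕ)^k) = b ^ ((1:ℝ)/3) := by
  rw [← Real.rpow_natCast _ (3^k), ← Real.rpow_mul hb]
  congr 1
  push_cast
  rw [pow_succ]
  field_simp

open Filter in
theorem stmt2 (p : ℕ → ℤ) (hp : ∀ k ≥ 1, 2 ≤ p k)
    (hrec : ∀ k ≥ 1, p k ^ 3 ≤ p (k + 1) ∧ p (k + 1) < (p k + 1) ^ 3 - 1) :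
    ∃ w : ℝ, Tendsto (fun k => (p k : ℝ) ^ ((1 : ℝ) / 3 ^ k)) atTop (nhds w) ∧
      1 < w ∧ ∀ k ≥ 1, ⌊w ^ (3 ^ k : ℕ)⌋ = p k := by
  have hx2 : ∀ k, (2:ℝ) ≤ (p (k+1) : ℝ) := fun k => by
    exact_mod_cast hp (k+1) (Nat.le_add_left 1 k)
  have hx0 : ∀ k, (0:ℝ) ≤ (p (k+1) : ℝ) := fun k => le_trans (by norm_num) (hx2 k)
  set u : ℕ → ℝ := fun k => (p (k+1) : ℝ) ^ ((1:ℝ)/3^(k+1)) with hu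
  set v : ℕ → ℝ := fun k => ((p (k+1) : ℝ) + 1) ^ ((1:ℝ)/3^(k+1)) with hv
  -- recurrence facts, cast to ℝ
  have hrec1 : ∀ m : ℕ, ((p (m+1) : ℝ))^3 ≤ (p (m+2) : ℝ) := fun m => by
    exact_mod_cast (hrec (m+1) (Nat.le_add_left 1 m)).1
  have hrec2 : ∀ m : ℕ, (p (m+2) : ℝ) + 1 < ((p (m+1) : ℝ) + 1)^3 := fun m => by
    have h := (hrec (m+1) (Nat.le_add_left 1 m)).2
    have : p (m+2) + 1 < (p (m+1) + 1)^3 := by linarith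
    exact_mod_cast this
  have humono : Monotone u := by
    apply monotone_nat_of_le_succ
    intro m
    have : u m = ((p (m+1) : ℝ)^3) ^ ((1:ℝ)/3^(m+2)) := (cube_rpow _ (hx0 m) (m+1)).symm
    rw [hu]
    simp only
    rw [show m + 1 + 1 = m + 2 from rfl] at this ⊢
    rw [← cube_rpow _ (hx0 m) (m+1)]
    exact Real.rpow_le_rpow (pow_nonneg (hx0 m) 3) (hrec1 m) (by positivity)
  have hvanti : Antitone v := by
    apply antitone_nat_of_succ_le
    intro m
    have hb : (0:ℝ) ≤ (p (m+1) : ℝ) + 1 := by linarith [hx0 m]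
    have key : (p (m+2) : ℝ) + 1 ≤ ((p (m+1) : ℝ) + 1)^3 := (hrec2 m).le
    calc v (m+1) = ((p (m+2) : ℝ) + 1) ^ ((1:ℝ)/3^(m+2)) := rfl
      _ ≤ (((p (m+1) : ℝ) + 1)^3) ^ ((1:ℝ)/3^(m+2)) := by
          apply Real.rpow_le_rpow (by linarith [hx0 (m+1)]) key (by positivity)
      _ = v m := cube_rpow _ hb (m+1)
  have huv : ∀ m, u m < v m := fun m => by
    exact Real.rpow_lt_rpow (hx0 m) (lt_add_one _) (by positivity)
  have hle : ∀ m j, u m ≤ v j := by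
    intro m j
    rcases le_total m j with h | h
    · exact le_of_lt (lt_of_le_of_lt (humono h) (huv j))
    · exact le_of_lt (lt_of_lt_of_le (huv m) (hvanti h))
  have hbdd : BddAbove (Set.range u) := ⟨v 0, by rintro _ ⟨m, rfl⟩; exact hle m 0⟩
  set w := ⨆ m, u m with hw
  have htend : Tendsto u atTop (nhds w) := tendsto_atTop_ciSup humono hbdd
  have h1w : 1 < w := by
    have h0 : (1:ℝ) < u 0 := by
      have hpos : (0:ℝ) < (p 1 : ℝ) := by linarith [hx2 0]
      have : (1:ℝ) < (p 1 : ℝ) := by linarith [hx2 0]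
      exact (Real.one_lt_rpow_iff_of_pos hpos).mpr (Or.inl ⟨this, by norm_num⟩)
    exact lt_of_lt_of_le h0 (le_ciSup hbdd 0)
  have hwpos : (0:ℝ) < w := lt_trans one_pos h1w
  refine ⟨w, ?_, h1w, ?_⟩
  · exact (tendsto_add_atTop_iff_nat 1).mp htend
  · intro k hk
    obtain ⟨m, rfl⟩ : ∃ m, k = m + 1 := ⟨k - 1, (Nat.succ_pred_eq_of_pos hk).symm⟩
    have hu_le : u m ≤ w := le_ciSup hbdd m
    have hw_le : w ≤ v (m+1) := ciSup_le (fun j => hle j (m+1))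
    have hlower : (p (m+1) : ℝ) ≤ w ^ ((3:ℕ)^(m+1)) := by
      calc (p (m+1) : ℝ) = (u m) ^ ((3:ℕ)^(m+1)) := (rpow_inv_pow _ (hx0 m) (m+1)).symm
        _ ≤ w ^ ((3:ℕ)^(m+1)) := pow_le_pow_left₀ (Real.rpow_nonneg (hx0 m) _) hu_le _
    have hupper : w ^ ((3:ℕ)^(m+1)) < (p (m+1) : ℝ) + 1 := by
      have hb : (0:ℝ) ≤ (p (m+2) : ℝ) + 1 := by linarith [hx0 (m+1)]
      have hb' : (0:ℝ) ≤ (p (m+1) : ℝ) + 1 := by linarith [hx0 m]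
      calc w ^ ((3:ℕ)^(m+1)) ≤ (v (m+1)) ^ ((3:ℕ)^(m+1)) :=
            pow_le_pow_left₀ hwpos.le hw_le _
        _ = ((p (m+2) : ℝ) + 1) ^ ((1:ℝ)/3) := rpow_pow_third _ hb (m+1)
        _ < (((p (m+1) : ℝ) + 1)^3) ^ ((1:ℝ)/3) :=
            Real.rpow_lt_rpow hb (hrec2 m) (by norm_num)
        _ = (p (m+1) : ℝ) + 1 := by
            have := cube_rpow ((p (m+1) : ℝ) + 1) hb' 0
            simpa using this
    rw [Int.floor_eq_iff]
    constructor
    · exact hlower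
    · exact_mod_cast hupper
end

section
/- Let θ = 21/40 and let (p_k) be a sequence of integers with p_k ≥ 2 such that p_k^3 ≤ p_{k+1} ≤ p_k^3 + p_k^{3θ} for every k, and let w = lim p_k^{1/3^k} (which exists). Then there exists γ > 0 such that for every sufficiently large k, |w^{3^k} − p_k| ≤ exp(−3^k γ). -/
open Filter

lemma aux_lower (p : ℕ → ℤ) (hp : 2 ≤ p 1)
    (hrec : ∀ k ≥ 1, p k ^ 3 ≤ p (k + 1)) :
    ∀ k, (2:ℤ) ^ (3 ^ k) ≤ p (k + 1) := by
  intro k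
  induction k with
  | zero => simpa using hp
  | succ n ih =>
    have h1 := hrec (n+1) (by omega)
    calc (2:ℤ) ^ (3 ^ (n+1)) = ((2:ℤ) ^ (3 ^ n)) ^ 3 := by
          rw [← pow_mul, pow_succ]
      _ ≤ (p (n+1)) ^ 3 := pow_le_pow_left₀ (by positivity) ih 3
      _ ≤ p (n+2) := h1

lemma aux_mono (p : ℕ → ℤ) (hp : ∀ k ≥ 1, 2 ≤ p k)
    (hrec : ∀ k ≥ 1, p k ^ 3 ≤ p (k + 1)) :
    ∀ k ≥ 1, ∀ n ≥ k, p k ≤ p n := by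
  intro k hk n hn
  induction n, hn using Nat.le_induction with
  | base => exact le_refl _
  | succ n hn ih =>
    refine ih.trans ?_
    have h2 := hp n (hk.trans hn)
    have := hrec n (hk.trans hn)
    nlinarith [sq_nonneg (p n), mul_pos (by linarith : (0:ℤ) < p n) (by linarith : (0:ℤ) < p n)]

lemma step_log (a b : ℝ) (ha : 2 ≤ a) (h1 : a ^ 3 ≤ b)
    (h2 : b ≤ a ^ 3 + a ^ ((3:ℝ) * (21/40))) :
    3 * Real.log a ≤ Real.log b ∧
      Real.log b ≤ 3 * Real.log a + a ^ (-(57/40) : ℝ) := by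
  have ha0 : (0:ℝ) < a := by linarith
  have ht0 : (0:ℝ) < a ^ (-(57/40) : ℝ) := Real.rpow_pos_of_pos ha0 _
  have hb0 : (0:ℝ) < b := lt_of_lt_of_le (by positivity) h1
  constructor
  · have := Real.log_le_log (by positivity) h1
    rwa [Real.log_pow] at this
  · have hsplit : a ^ ((3:ℝ) * (21/40)) = a ^ 3 * a ^ (-(57/40) : ℝ) := by
      rw [← Real.rpow_natCast a 3, ← Real.rpow_add ha0]
      norm_num
    have h3 : b ≤ a ^ 3 * (1 + a ^ (-(57/40) : ℝ)) := by
      rw [mul_add, mul_one]; rw [hsplit] at h2; linarith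
    have h4 := Real.log_le_log hb0 h3
    rw [Real.log_mul (by positivity) (by positivity), Real.log_pow] at h4
    have h5 : Real.log (1 + a ^ (-(57/40) : ℝ)) ≤ a ^ (-(57/40) : ℝ) := by
      have := Real.log_le_sub_one_of_pos (x := 1 + a ^ (-(57/40):ℝ)) (by linarith)
      linarith
    push_cast at h4
    linarith

lemma rpow_neg_anti (x y c : ℝ) (hx : 0 < x) (hxy : x ≤ y) (hc : 0 ≤ c) :
    y ^ (-c) ≤ x ^ (-c) := by
  have hy : 0 < y := hx.trans_le hxy
  rw [Real.rpow_neg hx.le, Real.rpow_neg hy.le]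
  exact inv_anti₀ (Real.rpow_pos_of_pos hx c) (Real.rpow_le_rpow hx.le hxy hc)

open Filter in
theorem stmt3 (p : ℕ → ℤ) (hp : ∀ k ≥ 1, 2 ≤ p k)
    (hrec : ∀ k ≥ 1, p k ^ 3 ≤ p (k + 1) ∧
      (p (k + 1) : ℝ) ≤ (p k : ℝ) ^ 3 + (p k : ℝ) ^ ((3 : ℝ) * (21 / 40)))
    (w : ℝ) (hw : Tendsto (fun k => (p k : ℝ) ^ ((1 : ℝ) / 3 ^ k)) atTop (nhds w)) :
    ∃ γ > 0, ∃ N : ℕ, ∀ k ≥ N, k ≥ 1 →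
      |w ^ (3 ^ k : ℕ) - (p k : ℝ)| ≤ Real.exp (-(3 ^ k * γ)) := by
  have hlog2 : (0:ℝ) < Real.log 2 := Real.log_pos (by norm_num)
  refine ⟨17 * Real.log 2 / 120, by positivity, 1, ?_⟩
  have hrec1 : ∀ k ≥ 1, p k ^ 3 ≤ p (k+1) := fun k hk => (hrec k hk).1
  have hlow := aux_lower p (hp 1 le_rfl) hrec1
  have hmono := aux_mono p hp hrec1
  have hpR : ∀ k ≥ 1, (2:ℝ) ≤ (p k:ℝ) := fun k hk => by exact_mod_cast hp k hk
  set L : ℕ → ℝ := fun n => Real.log (p n) / 3 ^ n with hLdef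
  have hstep : ∀ n ≥ 1, 3 * Real.log (p n) ≤ Real.log (p (n+1)) ∧
      Real.log (p (n+1)) ≤ 3 * Real.log (p n) + (p n:ℝ) ^ (-(57/40):ℝ) := by
    intro n hn
    exact step_log _ _ (hpR n hn) (by exact_mod_cast (hrec n hn).1) (hrec n hn).2
  have hLstep : ∀ n ≥ 1, L n ≤ L (n+1) ∧
      L (n+1) ≤ L n + (p n:ℝ) ^ (-(57/40):ℝ) / 3 ^ (n+1) := by
    intro n hn
    have h3n : (0:ℝ) < 3 ^ n := by positivity
    obtain ⟨hs1, hs2⟩ := hstep n hn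
    constructor
    · show Real.log (p n) / 3 ^ n ≤ Real.log (p (n+1)) / 3 ^ (n+1)
      rw [div_le_div_iff₀ h3n (by positivity), pow_succ]
      nlinarith
    · show Real.log (p (n+1)) / 3 ^ (n+1) ≤
        Real.log (p n) / 3 ^ n + (p n:ℝ) ^ (-(57/40):ℝ) / 3 ^ (n+1)
      have he : Real.log (p n) / 3 ^ n + (p n:ℝ) ^ (-(57/40):ℝ) / 3 ^ (n+1)
          = (3 * Real.log (p n) + (p n:ℝ) ^ (-(57/40):ℝ)) / 3 ^ (n+1) := by
        rw [pow_succ]; field_simp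
      rw [he]
      exact div_le_div_of_nonneg_right hs2 (by positivity)
  -- tendsto of L
  have hw1 : (1:ℝ) ≤ w := by
    refine ge_of_tendsto hw ?_
    filter_upwards [eventually_ge_atTop 1] with n hn
    have h2 : (1:ℝ) ≤ (p n:ℝ) := by linarith [hpR n hn]
    calc (1:ℝ) = 1 ^ ((1:ℝ)/3^n) := (Real.one_rpow _).symm
      _ ≤ (p n:ℝ) ^ ((1:ℝ)/3^n) := Real.rpow_le_rpow zero_le_one h2 (by positivity)
  have hwpos : (0:ℝ) < w := lt_of_lt_of_le one_pos hw1
  have hLtend : Tendsto L atTop (nhds (Real.log w)) := by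
    refine Tendsto.congr' ?_ (hw.log (ne_of_gt hwpos))
    filter_upwards [eventually_ge_atTop 1] with n hn
    have h0 : (0:ℝ) < (p n:ℝ) := by linarith [hpR n hn]
    rw [Real.log_rpow h0]
    simp [hLdef]; ring
  intro k _ hk1
  have h3k : (0:ℝ) < 3 ^ k := by positivity
  set C : ℝ := (p k:ℝ) ^ (-(57/40):ℝ) with hCdef
  have hpk2 : (2:ℝ) ≤ (p k:ℝ) := hpR k hk1
  have hpk0 : (0:ℝ) < (p k:ℝ) := by linarith
  have hC0 : 0 < C := Real.rpow_pos_of_pos hpk0 _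
  have hCanti : ∀ n ≥ k, (p n:ℝ) ^ (-(57/40):ℝ) ≤ C := by
    intro n hn
    refine rpow_neg_anti _ _ _ hpk0 ?_ (by norm_num)
    exact_mod_cast hmono k hk1 n hn
  have htel : ∀ n ≥ k, L n ≤ L k + C * (1/3^k - 1/3^n) / 2 := by
    intro n hn
    induction n, hn using Nat.le_induction with
    | base => simp
    | succ n hn ih =>
      have hn1 : n ≥ 1 := hk1.trans hn
      have h2 := (hLstep n hn1).2
      have h3 := hCanti n hn
      have h3n : (0:ℝ) < 3 ^ n := by positivity
      have hkey : (p n:ℝ) ^ (-(57/40):ℝ) / 3 ^ (n+1) ≤ C * (1/3^n - 1/3^(n+1)) / 2 := by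
        have he : C * (1/3^n - 1/3^(n+1)) / 2 = C / 3^(n+1) := by
          rw [pow_succ]; field_simp; ring
        rw [he]
        exact div_le_div_of_nonneg_right h3 (by positivity)
      calc L (n+1) ≤ L n + (p n:ℝ) ^ (-(57/40):ℝ) / 3 ^ (n+1) := h2
        _ ≤ L k + C * (1/3^k - 1/3^n) / 2 + C * (1/3^n - 1/3^(n+1)) / 2 := by linarith
        _ = L k + C * (1/3^k - 1/3^(n+1)) / 2 := by ring
  have hLmono : ∀ n ≥ k, L k ≤ L n := by
    intro n hn
    induction n, hn using Nat.le_induction with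
    | base => exact le_refl _
    | succ n hn ih => exact ih.trans (hLstep n (hk1.trans hn)).1
  have hlk : L k ≤ Real.log w := by
    refine ge_of_tendsto hLtend ?_
    filter_upwards [eventually_ge_atTop k] with n hn using hLmono n hn
  have hub : Real.log w ≤ L k + C * (1/3^k) / 2 := by
    refine le_of_tendsto hLtend ?_
    filter_upwards [eventually_ge_atTop k] with n hn
    have h1 := htel n hn
    have h2 : C * (1/3^k - 1/3^n) ≤ C * (1/3^k) := by
      refine mul_le_mul_of_nonneg_left ?_ hC0.le
      have : (0:ℝ) < 1/3^n := by positivity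
      linarith
    linarith
  set δ : ℝ := 3 ^ k * Real.log w - Real.log (p k) with hδdef
  have hlogpk : Real.log (p k) = 3 ^ k * L k := by
    simp only [hLdef]; field_simp
  have hδ0 : 0 ≤ δ := by
    have := mul_le_mul_of_nonneg_left hlk h3k.le
    simp only [hδdef, hlogpk]; linarith
  have hδC : δ ≤ C / 2 := by
    have h1 := mul_le_mul_of_nonneg_left hub h3k.le
    have h2 : 3 ^ k * (L k + C * (1/3^k) / 2) = 3 ^ k * L k + C / 2 := by
      field_simp
    simp only [hδdef, hlogpk]
    linarith [h1, h2.le]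
  have hChalf : C ≤ 1/2 := by
    have h1 : C ≤ (2:ℝ) ^ (-(57/40):ℝ) := rpow_neg_anti _ _ _ (by norm_num) hpk2 (by norm_num)
    have h2 : (2:ℝ) ^ (-(57/40):ℝ) ≤ (2:ℝ) ^ (-1:ℝ) :=
      Real.rpow_le_rpow_of_exponent_le (by norm_num) (by norm_num)
    have h3 : (2:ℝ) ^ (-1:ℝ) = 1/2 := by
      rw [Real.rpow_neg_one]; norm_num
    linarith
  have hδhalf : δ ≤ 1/2 := by linarith
  -- exponential bound
  have hexp2 : Real.exp δ - 1 ≤ 2 * δ := by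
    have h1 : 1 - δ ≤ Real.exp (-δ) := by linarith [Real.add_one_le_exp (-δ)]
    have h2 : (1 - δ) * Real.exp δ ≤ 1 := by
      have := mul_le_mul_of_nonneg_right h1 (Real.exp_pos δ).le
      rwa [← Real.exp_add, neg_add_cancel, Real.exp_zero] at this
    nlinarith [Real.exp_pos δ]
  have hwpow : w ^ (3 ^ k : ℕ) = (p k:ℝ) * Real.exp δ := by
    have h1 : w ^ (3 ^ k : ℕ) = Real.exp ((3:ℝ) ^ k * Real.log w) := by
      rw [← Real.rpow_natCast w, Real.rpow_def_of_pos hwpos]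
      congr 1
      push_cast
      ring
    rw [h1]
    have h2 : (3:ℝ) ^ k * Real.log w = Real.log (p k) + δ := by
      simp only [hδdef]; ring
    rw [h2, Real.exp_add, Real.exp_log hpk0]
  have habs : |w ^ (3 ^ k : ℕ) - (p k:ℝ)| = (p k:ℝ) * (Real.exp δ - 1) := by
    rw [hwpow]
    rw [abs_of_nonneg]
    · ring
    · have h1 : (1:ℝ) ≤ Real.exp δ := by
        rw [← Real.exp_zero]; exact Real.exp_le_exp.mpr hδ0
      nlinarith
  have hmain : |w ^ (3 ^ k : ℕ) - (p k:ℝ)| ≤ (p k:ℝ) ^ (-(17/40):ℝ) := by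
    rw [habs]
    have h1 : (p k:ℝ) * (Real.exp δ - 1) ≤ (p k:ℝ) * (2 * δ) :=
      mul_le_mul_of_nonneg_left hexp2 hpk0.le
    have h2 : (p k:ℝ) * (2 * δ) ≤ (p k:ℝ) * C := by
      have : 2 * δ ≤ C := by linarith
      exact mul_le_mul_of_nonneg_left this hpk0.le
    have h3 : (p k:ℝ) * C = (p k:ℝ) ^ (-(17/40):ℝ) := by
      simp only [hCdef]
      nth_rewrite 1 [← Real.rpow_one (p k:ℝ)]
      rw [← Real.rpow_add hpk0]
      norm_num
    linarith [h3.le]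
  refine hmain.trans ?_
  obtain ⟨m, rfl⟩ : ∃ m, k = m + 1 := ⟨k-1, by omega⟩
  have hplow : ((2:ℝ)) ^ (((3^m : ℕ)):ℝ) ≤ (p (m+1):ℝ) := by
    rw [Real.rpow_natCast]
    exact_mod_cast hlow m
  have h17 : Real.exp (3^(m+1) * (17 * Real.log 2 / 120)) ≤ (p (m+1):ℝ) ^ ((17/40):ℝ) := by
    calc Real.exp ((3:ℝ)^(m+1) * (17 * Real.log 2 / 120))
        = (2:ℝ) ^ ((((3^m:ℕ)):ℝ) * (17/40)) := by
          rw [Real.rpow_def_of_pos (by norm_num : (0:ℝ) < 2)]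
          congr 1
          push_cast
          ring
      _ = ((2:ℝ) ^ (((3^m:ℕ)):ℝ)) ^ ((17/40):ℝ) := by
          rw [← Real.rpow_mul (by norm_num : (0:ℝ) ≤ 2)]
      _ ≤ (p (m+1):ℝ) ^ ((17/40):ℝ) :=
          Real.rpow_le_rpow (by positivity) hplow (by norm_num)
  have hneg : (p (m+1):ℝ) ^ (-(17/40):ℝ) = ((p (m+1):ℝ) ^ ((17/40):ℝ))⁻¹ :=
    Real.rpow_neg hpk0.le _
  rw [hneg, Real.exp_neg]
  exact inv_anti₀ (Real.exp_pos _) h17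
end

section
/- Let (p_k) be a sequence of integers with p_k ≥ 2 and p_k^3 ≤ p_{k+1} ≤ p_k^3 + p_k^{63/40} for all k, and suppose additionally that p_2 ≠ p_1^3. Let w = lim p_k^{1/3^k}. Then w is not an integer. -/
open Filter

private lemma cube_rpow_s4 (x : ℝ) (hx : 0 ≤ x) (j : ℕ) :
    (x ^ 3) ^ ((1:ℝ)/3^(j+1)) = x ^ ((1:ℝ)/3^j) := by
  rw [← Real.rpow_natCast x 3, ← Real.rpow_mul hx]
  congr 1
  have h3 : (3:ℝ)^j ≠ 0 := by positivity
  push_cast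
  field_simp
  ring

open Filter in
theorem stmt4 (p : ℕ → ℤ) (hp : ∀ k ≥ 1, 2 ≤ p k)
    (hrec : ∀ k ≥ 1, p k ^ 3 ≤ p (k + 1) ∧
      (p (k + 1) : ℝ) ≤ (p k : ℝ) ^ 3 + (p k : ℝ) ^ ((63 : ℝ) / 40))
    (hne : p 2 ≠ p 1 ^ 3)
    (w : ℝ) (hw : Tendsto (fun k => (p k : ℝ) ^ ((1 : ℝ) / 3 ^ k)) atTop (nhds w)) :
    ¬ ∃ n : ℤ, w = (n : ℝ) := by
  rintro ⟨n, rfl⟩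
  set A : ℕ → ℝ := fun k => (p k : ℝ) ^ ((1:ℝ)/3^k) with hA
  set B : ℕ → ℝ := fun k => ((p k : ℝ)+1) ^ ((1:ℝ)/3^k) with hB
  have hp1 : ∀ j, 1 ≤ j → (1:ℝ) ≤ (p j : ℝ) := by
    intro j hj
    have := hp j hj
    exact_mod_cast le_trans one_le_two this
  have hp0 : ∀ j, 1 ≤ j → (0:ℝ) ≤ (p j : ℝ) := fun j hj => le_trans zero_le_one (hp1 j hj)
  -- step lemmas
  have hAstep : ∀ j, 1 ≤ j → A j ≤ A (j+1) := by
    intro j hj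
    have h1 : ((p j : ℝ))^3 ≤ (p (j+1) : ℝ) := by exact_mod_cast (hrec j hj).1
    calc A j = ((p j : ℝ)^3) ^ ((1:ℝ)/3^(j+1)) := (cube_rpow_s4 _ (hp0 j hj) j).symm
      _ ≤ (p (j+1) : ℝ) ^ ((1:ℝ)/3^(j+1)) :=
        Real.rpow_le_rpow (pow_nonneg (hp0 j hj) 3) h1 (by positivity)
  have hBstep : ∀ j, 1 ≤ j → B (j+1) < B j := by
    intro j hj
    have h2 : (p (j+1) : ℝ) ≤ (p j : ℝ)^3 + (p j : ℝ)^2 := by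
      refine le_trans (hrec j hj).2 ?_
      have : (p j : ℝ) ^ ((63:ℝ)/40) ≤ (p j : ℝ) ^ ((2:ℝ)) :=
        Real.rpow_le_rpow_of_exponent_le (hp1 j hj) (by norm_num)
      rw [Real.rpow_two] at this
      linarith
    have hpj2 : (2:ℝ) ≤ (p j : ℝ) := by exact_mod_cast hp j hj
    have h3 : (p (j+1) : ℝ) + 1 < ((p j : ℝ) + 1)^3 := by nlinarith
    calc B (j+1) = ((p (j+1) : ℝ)+1) ^ ((1:ℝ)/3^(j+1)) := rfl
      _ < (((p j : ℝ)+1)^3) ^ ((1:ℝ)/3^(j+1)) :=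
        Real.rpow_lt_rpow (by linarith [hp0 (j+1) (by omega : 1 ≤ j+1)]) h3 (by positivity)
      _ = B j := cube_rpow_s4 _ (by positivity) j
  have hAmono : ∀ j k, 1 ≤ j → j ≤ k → A j ≤ A k := by
    intro j k hj hjk
    induction k, hjk using Nat.le_induction with
    | base => exact le_rfl
    | succ m hm ih => exact le_trans ih (hAstep m (le_trans hj hm))
  have hBanti : ∀ j k, 1 ≤ j → j ≤ k → B k ≤ B j := by
    intro j k hj hjk
    induction k, hjk using Nat.le_induction with
    | base => exact le_rfl
    | succ m hm ih => exact le_trans (hBstep m (le_trans hj hm)).le ih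
  have hAleB : ∀ j, 1 ≤ j → A j ≤ B j := by
    intro j hj
    exact Real.rpow_le_rpow (hp0 j hj) (by linarith [hp1 j hj]) (by positivity)
  have hgew : ∀ k, 1 ≤ k → A k ≤ (n:ℝ) := by
    intro k hk
    refine ge_of_tendsto hw (eventually_atTop.2 ⟨k, fun m hm => hAmono k m hk hm⟩)
  have hwle : ∀ k, 1 ≤ k → (n:ℝ) ≤ B k := by
    intro k hk
    refine le_of_tendsto hw (eventually_atTop.2 ⟨max 1 k, fun m hm => ?_⟩)
    exact le_trans (hAleB m (le_trans (le_max_left 1 k) hm))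
      (hBanti k m hk (le_trans (le_max_right 1 k) hm))
  have hwlt : ∀ k, 1 ≤ k → (n:ℝ) < B k := fun k hk =>
    lt_of_le_of_lt (hwle (k+1) (by omega)) (hBstep k hk)
  have hn0 : (0:ℝ) ≤ (n:ℝ) := le_trans (Real.rpow_nonneg (hp0 1 le_rfl) _) (hgew 1 le_rfl)
  have hApow : ∀ k, 1 ≤ k → A k ^ (3^k : ℕ) = (p k : ℝ) := by
    intro k hk
    rw [hA, ← Real.rpow_natCast _ (3^k), ← Real.rpow_mul (hp0 k hk)]
    have h3 : (3:ℝ)^k ≠ 0 := by positivity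
    rw [show (1:ℝ)/3^k * ((3^k : ℕ) : ℝ) = 1 by push_cast; field_simp, Real.rpow_one]
  have hBpow : ∀ k, 1 ≤ k → B k ^ (3^k : ℕ) = (p k : ℝ) + 1 := by
    intro k hk
    rw [hB, ← Real.rpow_natCast _ (3^k), ← Real.rpow_mul (by linarith [hp0 k hk])]
    have h3 : (3:ℝ)^k ≠ 0 := by positivity
    rw [show (1:ℝ)/3^k * ((3^k : ℕ) : ℝ) = 1 by push_cast; field_simp, Real.rpow_one]
  have key : ∀ k, 1 ≤ k → p k = n ^ (3^k : ℕ) := by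
    intro k hk
    have hlow : (p k : ℝ) ≤ (n:ℝ) ^ (3^k : ℕ) := by
      rw [← hApow k hk]
      exact pow_le_pow_left₀ (Real.rpow_nonneg (hp0 k hk) _) (hgew k hk) _
    have hhigh : (n:ℝ) ^ (3^k : ℕ) < (p k : ℝ) + 1 := by
      rw [← hBpow k hk]
      exact pow_lt_pow_left₀ (hwlt k hk) hn0 (by positivity)
    have hlow' : p k ≤ n ^ (3^k : ℕ) := by exact_mod_cast hlow
    have hhigh' : n ^ (3^k : ℕ) < p k + 1 := by exact_mod_cast hhigh
    omega
  have h1 := key 1 le_rfl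
  have h2 := key 2 (by omega)
  apply hne
  rw [h1, h2]
  norm_num
  ring
end

section
/- Let (c_k)_{k≥1} be a sequence of real numbers with c_k ≥ 1 for all k, set C_k = c_1·…·c_k, and define W(c_k) = {ξ > 1 : ⌊ξ^{C_k}⌋ is prime for every k ≥ 1}. If W(c_k) is non-empty, then W(c_k) has a smallest element. -/
theorem stmt5 (c : ℕ → ℝ) (hc : ∀ k, 1 ≤ c k)
    (C : ℕ → ℝ) (hC : ∀ k, C k = ∏ i ∈ Finset.Icc 1 k, c i)
    (W : Set ℝ) (hW : W = {ξ : ℝ | 1 < ξ ∧ ∀ k ≥ 1, Prime ⌊ξ ^ (C k)⌋})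
    (hne : W.Nonempty) :
    ∃ ξ ∈ W, ∀ x ∈ W, ξ ≤ x := by
  have hC1 : (1:ℝ) ≤ C 1 := by
    rw [hC]; simpa using hc 1
  have hCk : ∀ k, 0 ≤ C k := by
    intro k; rw [hC]
    exact Finset.prod_nonneg fun i _ => le_trans zero_le_one (hc i)
  have hlb : ∀ x ∈ W, (2:ℝ) ^ (C 1)⁻¹ ≤ x := by
    intro x hx
    rw [hW] at hx
    obtain ⟨hx1, hxp⟩ := hx
    have hp := hxp 1 le_rfl
    have h2 : (2:ℝ) ≤ x ^ C 1 := by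
      have hge1 : (1:ℝ) ≤ x ^ C 1 := Real.one_le_rpow hx1.le (le_trans zero_le_one hC1)
      have hf1 : (1:ℤ) ≤ ⌊x ^ C 1⌋ := by
        rw [Int.le_floor]; exact_mod_cast hge1
      have h2' : (2:ℤ) ≤ ⌊x ^ C 1⌋ := by
        rcases lt_or_eq_of_le hf1 with h | h
        · omega
        · exact absurd (h ▸ hp) (by norm_num)
      calc (2:ℝ) = ((2:ℤ):ℝ) := by norm_num
        _ ≤ (⌊x ^ C 1⌋ : ℝ) := by exact_mod_cast h2'
        _ ≤ x ^ C 1 := Int.floor_le _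
    have hx0 : (0:ℝ) < x := lt_trans one_pos hx1
    calc (2:ℝ) ^ (C 1)⁻¹ ≤ (x ^ C 1) ^ (C 1)⁻¹ :=
          Real.rpow_le_rpow (by norm_num) h2 (inv_nonneg.2 (le_trans zero_le_one hC1))
      _ = x := by
          rw [← Real.rpow_mul hx0.le, mul_inv_cancel₀ (by linarith), Real.rpow_one]
  set m := sInf W with hm
  have hbdd : BddBelow W := ⟨_, hlb⟩
  have hm_le : ∀ x ∈ W, m ≤ x := fun x hx => csInf_le hbdd hx
  have hmlb : (2:ℝ) ^ (C 1)⁻¹ ≤ m := le_csInf hne hlb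
  have hm1 : 1 < m := by
    refine lt_of_lt_of_le ?_ hmlb
    have h0 : 0 < (C 1)⁻¹ := inv_pos.2 (by linarith)
    exact Real.one_lt_rpow_iff_of_pos (by norm_num) |>.2 (Or.inl ⟨one_lt_two, h0⟩)
  refine ⟨m, ?_, hm_le⟩
  rw [hW]
  refine ⟨hm1, fun k hk => ?_⟩
  set n := ⌊m ^ C k⌋ with hn
  have hm0 : (0:ℝ) < m := lt_trans one_pos hm1
  have hcont : ContinuousAt (fun x : ℝ => x ^ C k) m :=
    Real.continuousAt_rpow_const m (C k) (Or.inl hm0.ne')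
  have hlt : m ^ C k < (n:ℝ) + 1 := Int.lt_floor_add_one _
  have hev : ∀ᶠ x in nhds m, x ^ C k < (n:ℝ) + 1 :=
    hcont.eventually_lt continuousAt_const hlt
  obtain ⟨ε, hε, hball⟩ := Metric.eventually_nhds_iff.1 hev
  obtain ⟨x, hxW, hxlt⟩ := Real.lt_sInf_add_pos hne hε
  have hmx : m ≤ x := hm_le x hxW
  have hdist : dist x m < ε := by
    rw [Real.dist_eq, abs_of_nonneg (by linarith)]
    rw [← hm] at hxlt
    linarith
  have hxup : x ^ C k < (n:ℝ) + 1 := hball hdist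
  have hxlo : (n:ℝ) ≤ x ^ C k :=
    le_trans (Int.floor_le _) (Real.rpow_le_rpow hm0.le hmx (hCk k))
  have hfloor : ⌊x ^ C k⌋ = n := by
    rw [Int.floor_eq_iff]; exact ⟨hxlo, hxup⟩
  have hxW' := hxW
  rw [hW] at hxW'
  have := hxW'.2 k hk
  rwa [hfloor] at this
end

section
/- Let (c_k)_{k≥1} be a sequence of positive integers with c_{k+1} ≥ 2 for all k, set C_k = c_1·…·c_k, let ξ be the smallest element of W(c_k) (assumed to exist and be nonempty), and let p_k = ⌊ξ^{C_k}⌋. Then for all k ≥ 1: p_k^{c_{k+1}} ≤ p_{k+1} < (p_k + 1)^{c_{k+1}} − 1. -/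
theorem stmt6 (c : ℕ → ℕ) (hc : ∀ k, 1 ≤ c k) (hc2 : ∀ k ≥ 1, 2 ≤ c (k + 1))
    (C : ℕ → ℕ) (hC : ∀ k, C k = ∏ i ∈ Finset.Icc 1 k, c i)
    (ξ : ℝ) (hξ : 1 < ξ) (hprime : ∀ k ≥ 1, Prime ⌊ξ ^ (C k)⌋)
    (hmin : ∀ x : ℝ, 1 < x → (∀ k ≥ 1, Prime ⌊x ^ (C k)⌋) → ξ ≤ x)
    (p : ℕ → ℤ) (hp : ∀ k, p k = ⌊ξ ^ (C k)⌋) :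
    ∀ k ≥ 1, p k ^ (c (k + 1)) ≤ p (k + 1) ∧ p (k + 1) < (p k + 1) ^ (c (k + 1)) - 1 := by
  intro k hk
  have hc' : 2 ≤ c (k + 1) := hc2 k hk
  have hCk1 : C (k + 1) = C k * c (k + 1) := by
    rw [hC, hC, Finset.prod_Icc_succ_top (by omega : 1 ≤ k + 1)]
  have hpk : Prime (p k) := by rw [hp]; exact hprime k hk
  have hpk1 : Prime (p (k + 1)) := by rw [hp]; exact hprime (k + 1) (by omega)
  have hxk : (1 : ℝ) ≤ ξ ^ C k := one_le_pow₀ hξ.le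
  have hlow : (p k : ℝ) ≤ ξ ^ C k := by rw [hp]; exact Int.floor_le _
  have hup : ξ ^ C k < (p k : ℝ) + 1 := by rw [hp]; exact Int.lt_floor_add_one _
  have h1 : (1 : ℤ) ≤ p k := by rw [hp]; exact_mod_cast Int.le_floor.mpr (by exact_mod_cast hxk)
  have h2 : (2 : ℤ) ≤ p k := by
    rcases lt_or_eq_of_le h1 with h | h
    · omega
    · exact absurd h.symm hpk.ne_one
  have key : ξ ^ C (k + 1) = (ξ ^ C k) ^ (c (k + 1)) := by rw [hCk1, pow_mul]
  have hpos : (0 : ℝ) ≤ (p k : ℝ) := by exact_mod_cast (by omega : (0:ℤ) ≤ p k)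
  have l1 : ((p k : ℝ)) ^ (c (k + 1)) ≤ ξ ^ C (k + 1) := by
    rw [key]; exact pow_le_pow_left₀ hpos hlow _
  have lower : p k ^ (c (k + 1)) ≤ p (k + 1) := by
    rw [hp (k+1), Int.le_floor]; push_cast; exact l1
  have u1 : ξ ^ C (k + 1) < ((p k : ℝ) + 1) ^ (c (k + 1)) := by
    rw [key]
    exact pow_lt_pow_left₀ hup (le_trans (by norm_num) hxk) (by omega)
  have upper' : p (k + 1) < (p k + 1) ^ (c (k + 1)) := by
    rw [hp (k+1), Int.floor_lt]; push_cast; exact u1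
  refine ⟨lower, ?_⟩
  -- strict upper bound
  have hdvd : p k ∣ (p k + 1) ^ (c (k + 1)) - 1 := by
    have := sub_dvd_pow_sub_pow (p k + 1) 1 (c (k + 1))
    simpa using this
  have hne : p (k + 1) ≠ (p k + 1) ^ (c (k + 1)) - 1 := by
    intro heq
    have hdvd' : p k ∣ p (k + 1) := heq ▸ hdvd
    -- p k < p (k+1)
    have hsq : p k ^ 2 ≤ p k ^ (c (k + 1)) := pow_le_pow_right₀ (by omega) hc'
    have hlt : p k < p (k + 1) := by nlinarith [lower, hsq, sq_nonneg (p k)]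
    obtain ⟨m, hm⟩ := hdvd'
    rcases hpk1.irreducible.isUnit_or_isUnit hm with hu | hu
    · rw [Int.isUnit_iff] at hu; omega
    · rw [Int.isUnit_iff] at hu
      rcases hu with h | h <;> rw [h] at hm <;> omega
  omega
end
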